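/- Let h ≥ 2 and c ≥ 1 be integers. Assume that for every positive integer h' < h and every h'-regular pair (d';a') = (d_1',…,d_{c'}'; a_0',…,a_{n'}') with c' ≤ c, c' ≤ n' and a_i' ∤ h' for all i, one has δ(d';a') ≥ F^{h'}(a_0',…,a_{n'}'). Let (d;a) = (d_1,…,d_c; a_0,…,a_n) be an h-regular pair with c ≤ n and a_i ∤ h for all i, and suppose there exists a prime p dividing h such that δ̄(p) := δ(d;a) − δ(d(p);a(p)) ≥ 0 and the number of degrees divisible by p is strictly smaller than the number of weights divisible by p. Then δ(d;a) ≥ F^h(a_0,…,a_n). -/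

import Mathlib

open Finset

/-- The amplitude `δ` of the (sub)pair given by the degrees `d` indexed by `D`
and the weights `a` indexed by `A`. -/
def deltaOn {ι κ : Type*} (D : Finset ι) (d : ι → ℕ) (A : Finset κ) (a : κ → ℕ) : ℤ :=
  (∑ j ∈ D, (d j : ℤ)) - ∑ i ∈ A, (a i : ℤ)

/-- The amplitude of a full pair `(d;a)`. -/
def deltaPair {ι κ : Type*} [Fintype ι] [Fintype κ] (d : ι → ℕ) (a : κ → ℕ) : ℤ :=
  deltaOn univ d univ a

/-- `h`-regularity of the (sub)pair given by the degrees `d` indexed by `D` and the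
weights `a` indexed by `A`: for every nonempty subset `I ⊆ A` of the weight indices with
`a_I := gcd_{i ∈ I} a i > 1`, either there are `|I|` pairwise distinct degree indices
`p ∈ D` with `a_I ∣ d p`, or `a_I ∣ h`. -/
def IsHRegularOn {ι κ : Type*} (h : ℕ) (D : Finset ι) (d : ι → ℕ)
    (A : Finset κ) (a : κ → ℕ) : Prop :=
  ∀ I : Finset κ, I ⊆ A → I.Nonempty → 1 < I.gcd a →
    (∃ P : Finset ι, P ⊆ D ∧ P.card = I.card ∧ ∀ j ∈ P, I.gcd a ∣ d j) ∨ I.gcd a ∣ h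

/-- `h`-regularity of a full pair `(d;a)`. -/
def IsHRegularPair {ι κ : Type*} [Fintype ι] [Fintype κ] (h : ℕ) (d : ι → ℕ)
    (a : κ → ℕ) : Prop :=
  IsHRegularOn h univ d univ a

/-- The generalised `1/h`-Frobenius number `F^h` of the weights indexed by `A`.
Letting `g` be the gcd of the weights, this is the largest integer `z` divisible by
`lcm g h` that is not a nonnegative integral combination of the weights; this agrees
with the renormalised definition `F^h = g * F^{h / gcd (g,h)} (a/g)`.  For `g = 1`
it is the largest multiple of `h` that is not a nonnegative integral combination of
the weights (so it equals `-h` if every positive multiple of `h` is such a combination),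
and `frobOn 1 A a` is the ordinary Frobenius number `F` (so `F = -1` if some weight
equals `1`). -/
noncomputable def frobOn {κ : Type*} (h : ℕ) (A : Finset κ) (a : κ → ℕ) : ℤ :=
  sSup {z : ℤ | ((Nat.lcm (A.gcd a) h : ℕ) : ℤ) ∣ z ∧
    ¬ ∃ x : κ → ℕ, ((∑ i ∈ A, x i * a i : ℕ) : ℤ) = z}

/-- The generalised `1/h`-Frobenius number `F^h` of a full tuple of weights. -/
noncomputable def frobNum {κ : Type*} [Fintype κ] (h : ℕ) (a : κ → ℕ) : ℤ :=
  frobOn h univ a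

section MyHelpers

private lemma bezout_finset {ι : Type*} [DecidableEq ι] (s : Finset ι) (f : ι → ℕ) :
    ∃ c : ι → ℤ, ∑ i ∈ s, c i * (f i : ℤ) = ((s.gcd f : ℕ) : ℤ) := by
  induction s using Finset.induction_on with
  | empty => exact ⟨0, by simp⟩
  | @insert i s hi ih =>
    obtain ⟨c, hc⟩ := ih
    refine ⟨fun j => if j = i then Nat.gcdA (f i) (s.gcd f) else Nat.gcdB (f i) (s.gcd f) * c j,
      ?_⟩
    rw [Finset.sum_insert hi, Finset.gcd_insert]
    have hcongr : ∀ j ∈ s,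
        (if j = i then Nat.gcdA (f i) (s.gcd f) else Nat.gcdB (f i) (s.gcd f) * c j) * (f j : ℤ)
          = Nat.gcdB (f i) (s.gcd f) * (c j * (f j : ℤ)) := by
      intro j hj
      rw [if_neg (by rintro rfl; exact hi hj)]
      ring
    rw [Finset.sum_congr rfl hcongr, ← Finset.mul_sum, hc]
    beta_reduce
    rw [if_pos rfl]
    have hiseq : GCDMonoid.gcd (f i) (s.gcd f) = Nat.gcd (f i) (s.gcd f) := rfl
    rw [hiseq, Nat.gcd_eq_gcd_ab]
    ring

private lemma repr_large {ι : Type*} [DecidableEq ι] (s : Finset ι) (f : ι → ℕ)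
    (t : ι) (hts : t ∈ s) (hft : 0 < f t) :
    ∃ B : ℤ, ∀ z : ℤ, B ≤ z → ((s.gcd f : ℕ) : ℤ) ∣ z →
      ∃ x : ι → ℕ, ((∑ i ∈ s, x i * f i : ℕ) : ℤ) = z := by
  obtain ⟨c, hc⟩ := bezout_finset s f
  set g : ℤ := ((s.gcd f : ℕ) : ℤ) with hg
  set A : ℤ := (f t : ℤ) with hA
  have hA0 : 0 < A := by rw [hA]; exact_mod_cast hft
  set e : ℤ := ∑ i ∈ s.erase t, (c i % A) * (f i : ℤ) with he
  have he0 : 0 ≤ e := Finset.sum_nonneg fun i _ =>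
    mul_nonneg (Int.emod_nonneg _ hA0.ne') (Int.natCast_nonneg _)
  have heg : A ∣ e - g := by
    have h1 : A ∣ e - ∑ i ∈ s.erase t, c i * (f i : ℤ) := by
      rw [he, ← Finset.sum_sub_distrib]
      refine Finset.dvd_sum fun i _ => ?_
      rw [← sub_mul]
      exact Dvd.dvd.mul_right ⟨-(c i / A), by rw [Int.emod_def]; ring⟩ _
    have h2 : g = (∑ i ∈ s.erase t, c i * (f i : ℤ)) + c t * A := by
      rw [← hc, ← Finset.sum_erase_add s _ hts]
    have h3 : e - g = (e - ∑ i ∈ s.erase t, c i * (f i : ℤ)) - c t * A := by rw [h2]; ring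
    rw [h3]
    exact dvd_sub h1 (dvd_mul_left A (c t))
  refine ⟨A * e + 1, fun z hz hdvd => ?_⟩
  obtain ⟨m, rfl⟩ := hdvd
  set m' : ℤ := m % A with hm'
  have hm'0 : 0 ≤ m' := Int.emod_nonneg _ hA0.ne'
  have hm'A : m' < A := Int.emod_lt_of_pos _ hA0
  have hAz : A ∣ g * m - m' * e := by
    have d1 : A ∣ (m - m') * g :=
      Dvd.dvd.mul_right ⟨m / A, by rw [hm', Int.emod_def]; ring⟩ _
    have d2 : A ∣ m' * (e - g) := Dvd.dvd.mul_left heg _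
    rw [show g * m - m' * e = (m - m') * g - m' * (e - g) by ring]
    exact dvd_sub d1 d2
  obtain ⟨k, hk⟩ := hAz
  have hk1 : 1 ≤ A * k := by
    have h1 : m' * e ≤ A * e := mul_le_mul_of_nonneg_right (le_of_lt hm'A) he0
    linarith
  have hk0 : 0 ≤ k := le_of_mul_le_mul_left (by linarith : A * 0 ≤ A * k) hA0
  refine ⟨fun i => if i = t then k.toNat
    else if i ∈ s.erase t then (m' * (c i % A)).toNat else 0, ?_⟩
  push_cast
  rw [← Finset.sum_erase_add s _ hts]
  have hterm : ∀ i ∈ s.erase t,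
      ((if i = t then (k.toNat : ℤ)
        else if i ∈ s.erase t then ((m' * (c i % A)).toNat : ℤ) else 0) * (f i : ℤ))
        = m' * ((c i % A) * (f i : ℤ)) := by
    intro i hi
    rw [if_neg (Finset.ne_of_mem_erase hi), if_pos hi,
      Int.toNat_of_nonneg (mul_nonneg hm'0 (Int.emod_nonneg _ hA0.ne'))]
    ring
  rw [Finset.sum_congr rfl hterm, ← Finset.mul_sum, ← he, if_pos rfl,
    Int.toNat_of_nonneg hk0]
  linarith

private lemma sum_orderIso {κ M : Type*} [AddCommMonoid M] (s : Finset κ) [LinearOrder κ]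
    {k : ℕ} (hs : s.card = k) (F : κ → M) :
    ∑ i : Fin k, F (s.orderIsoOfFin hs i) = ∑ i ∈ s, F i := by
  rw [← Finset.sum_coe_sort s F]
  exact Equiv.sum_comp (s.orderIsoOfFin hs).toEquiv (fun x => F (x : κ))

private lemma gcd_orderIso {κ : Type*} [LinearOrder κ] (s : Finset κ) {k : ℕ}
    (hs : s.card = k) (F : κ → ℕ) :
    (univ : Finset (Fin k)).gcd (fun i => F (s.orderIsoOfFin hs i)) = s.gcd F := by
  apply Nat.dvd_antisymm
  · apply Finset.dvd_gcd
    intro b hb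
    have h := Finset.gcd_dvd (f := fun i => F (s.orderIsoOfFin hs i))
      (mem_univ ((s.orderIsoOfFin hs).symm ⟨b, hb⟩))
    simpa using h
  · exact Finset.dvd_gcd fun i _ => Finset.gcd_dvd (s.orderIsoOfFin hs i).2

end MyHelpers

/-- **Lemma 4.9(ii)** -/

theorem reduction_lemma_ii (h c : ℕ) (hh : 2 ≤ h) (hc : 1 ≤ c)
    (IH : ∀ (h' c' n' : ℕ), 0 < h' → h' < h → 1 ≤ c' → c' ≤ c → c' ≤ n' →
      ∀ (d' : Fin c' → ℕ) (a' : Fin (n' + 1) → ℕ),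
        (∀ j, 0 < d' j) → (∀ i, 0 < a' i) → IsHRegularPair h' d' a' →
        (∀ i, ¬ a' i ∣ h') → deltaPair d' a' ≥ frobNum h' a')
    (n : ℕ) (hcn : c ≤ n)
    (d : Fin c → ℕ) (a : Fin (n + 1) → ℕ)
    (hd : ∀ j, 0 < d j) (ha : ∀ i, 0 < a i)
    (hreg : IsHRegularPair h d a) (hnd : ∀ i, ¬ a i ∣ h)
    (p : ℕ) (hp : p.Prime) (hph : p ∣ h)
    (hdelta : 0 ≤ deltaPair d a
        - deltaOn (Finset.univ.filter (fun j => p ∣ d j)) d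
            (Finset.univ.filter (fun i => p ∣ a i)) a)
    (hcard : (Finset.univ.filter (fun j => p ∣ d j)).card
        < (Finset.univ.filter (fun i : Fin (n + 1) => p ∣ a i)).card) :
    deltaPair d a ≥ frobNum h a := by
  set Dp : Finset (Fin c) := Finset.univ.filter (fun j => p ∣ d j) with hDpdef
  set Ap : Finset (Fin (n + 1)) := Finset.univ.filter (fun i => p ∣ a i) with hApdef
  have hp2 : 2 ≤ p := hp.two_le
  have hApne : Ap.Nonempty := card_pos.mp (lt_of_le_of_lt (Nat.zero_le _) hcard)
  have hpa : ∀ i ∈ Ap, p ∣ a i := fun i hi => (mem_filter.mp hi).2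
  have hpd : ∀ j ∈ Dp, p ∣ d j := fun j hj => (mem_filter.mp hj).2
  have halt1 : ∀ i : Fin (n + 1), 1 < a i := by
    intro i
    rcases Nat.lt_or_ge (a i) 2 with h1 | h2
    · exfalso
      have hi1 : a i = 1 := by have := ha i; omega
      exact hnd i (hi1 ▸ one_dvd h)
    · omega
  -- h = p * h'
  obtain ⟨h', hh'⟩ : ∃ h', h = p * h' := hph
  have hp0 : 0 < p := hp.pos
  have hh'0 : 0 < h' := by
    rcases Nat.eq_zero_or_pos h' with h0 | h0
    · exfalso; rw [h0, mul_zero] at hh'; omega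
    · exact h0
  have hh'lt : h' < h := by
    have : h' < p * h' := by
      calc h' = 1 * h' := (one_mul h').symm
      _ < p * h' := by exact (Nat.mul_lt_mul_right hh'0).mpr (by omega)
    omega
  -- Dp is nonempty
  obtain ⟨i0, hi0⟩ := hApne
  have hDpne : Dp.Nonempty := by
    have hgcd1 : 1 < ({i0} : Finset (Fin (n + 1))).gcd a := by
      rw [Finset.gcd_singleton]
      simpa using halt1 i0
    rcases hreg {i0} (subset_univ _) ⟨i0, mem_singleton_self i0⟩ hgcd1 with
      ⟨P, _, hPc, hPd⟩ | hdv
    · rw [card_singleton] at hPc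
      obtain ⟨j, hj⟩ := card_pos.mp (by omega : 0 < P.card)
      refine ⟨j, mem_filter.mpr ⟨mem_univ _, (hpa i0 hi0).trans ?_⟩⟩
      have := hPd j hj
      rwa [Finset.gcd_singleton, normalize_eq] at this
    · exfalso
      rw [Finset.gcd_singleton, normalize_eq] at hdv
      exact hnd i0 hdv
  -- the reduced pair
  obtain ⟨n', hn'⟩ : ∃ n', Ap.card = n' + 1 :=
    ⟨Ap.card - 1, by have := card_pos.mpr ⟨i0, hi0⟩; omega⟩
  set eD := Dp.orderIsoOfFin (rfl : Dp.card = Dp.card) with heD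
  set eA := Ap.orderIsoOfFin hn' with heA
  set d' : Fin Dp.card → ℕ := fun j => d (eD j) / p with hd'def
  set a' : Fin (n' + 1) → ℕ := fun i => a (eA i) / p with ha'def
  have hda : ∀ j : Fin Dp.card, d ((eD j : Fin c)) = p * d' j := fun j =>
    (Nat.mul_div_cancel' (hpd _ (eD j).2)).symm
  have haa : ∀ i : Fin (n' + 1), a ((eA i : Fin (n + 1))) = p * a' i := fun i =>
    (Nat.mul_div_cancel' (hpa _ (eA i).2)).symm
  have hd' : ∀ j, 0 < d' j := by
    intro j
    rcases Nat.eq_zero_or_pos (d' j) with h0 | h0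
    · exfalso; have h1 := hd (eD j); rw [hda j, h0, mul_zero] at h1; omega
    · exact h0
  have ha' : ∀ i, 0 < a' i := by
    intro i
    rcases Nat.eq_zero_or_pos (a' i) with h0 | h0
    · exfalso; have h1 := ha (eA i); rw [haa i, h0, mul_zero] at h1; omega
    · exact h0
  have hnd' : ∀ i, ¬ a' i ∣ h' := by
    intro i hdvd
    exact hnd (eA i) (by rw [haa i, hh']; exact mul_dvd_mul_left p hdvd)
  -- regularity of the reduced pair
  have hreg' : IsHRegularPair h' d' a' := by
    intro I _ hIne hIgcd
    classical
    set I' : Finset (Fin (n + 1)) := I.image (fun i => ((eA i : Ap) : Fin (n + 1))) with hI'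
    have hI'sub : I' ⊆ Ap := by
      intro x hx
      rw [hI', Finset.mem_image] at hx
      obtain ⟨i, _, rfl⟩ := hx
      exact (eA i).2
    have hinj : Function.Injective (fun i : Fin (n' + 1) => ((eA i : Ap) : Fin (n + 1))) :=
      Subtype.coe_injective.comp eA.toEquiv.injective
    have hI'card : I'.card = I.card := Finset.card_image_of_injective I hinj
    have hI'gcd : I'.gcd a = p * I.gcd a' := by
      rw [hI', Finset.gcd_image]
      have h1 : I.gcd (a ∘ fun i => ((eA i : Ap) : Fin (n + 1))) = I.gcd (fun i => p * a' i) :=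
        Finset.gcd_congr rfl (fun i _ => haa i)
      rw [h1]
      simpa using Finset.gcd_mul_left (s := I) (f := a')
    have h1 : 1 < I'.gcd a := by
      rw [hI'gcd]
      calc 1 < I.gcd a' := hIgcd
      _ ≤ p * I.gcd a' := Nat.le_mul_of_pos_left _ hp0
    rcases hreg I' (subset_univ _) (hIne.image _) h1 with ⟨P, _, hPc, hPd⟩ | hdvh
    · left
      have hPD : P ⊆ Dp := by
        intro j hj
        refine mem_filter.mpr ⟨mem_univ _, dvd_trans ?_ (hPd j hj)⟩
        rw [hI'gcd]
        exact dvd_mul_right p _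
      refine ⟨univ.filter (fun j' => (eD j' : Fin c) ∈ P), subset_univ _, ?_, ?_⟩
      · rw [← hI'card, ← hPc]
        apply Finset.card_bij (fun j' _ => (eD j' : Fin c))
        · intro j' hj'
          exact (mem_filter.mp hj').2
        · intro x hx y hy hxy
          exact eD.toEquiv.injective (Subtype.coe_injective hxy)
        · intro j hj
          refine ⟨eD.symm ⟨j, hPD hj⟩, mem_filter.mpr ⟨mem_univ _, by simpa using hj⟩, by simp⟩
      · intro j' hj'
        have hjP : (eD j' : Fin c) ∈ P := (mem_filter.mp hj').2
        have hdd := hPd _ hjP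
        rw [hI'gcd] at hdd
        obtain ⟨k, hk⟩ := hdd
        rw [mul_assoc] at hk
        exact ⟨k, by rw [hd'def]; simp only []; rw [hk, Nat.mul_div_cancel_left _ hp0]⟩
    · right
      rw [hI'gcd, hh'] at hdvh
      exact (mul_dvd_mul_iff_left (by omega : p ≠ 0)).mp hdvh
  -- apply IH
  have hc'1 : 1 ≤ Dp.card := card_pos.mpr hDpne
  have hc'c : Dp.card ≤ c := by
    have := Finset.card_le_univ Dp
    simpa using this
  have hc'n' : Dp.card ≤ n' := by omega
  have hIH := IH h' Dp.card n' hh'0 hh'lt hc'1 hc'c hc'n' d' a' hd' ha' hreg' hnd'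
  -- sum identities
  have hsumd : (∑ j ∈ Dp, (d j : ℤ)) = (p : ℤ) * ∑ j : Fin Dp.card, (d' j : ℤ) := by
    rw [← sum_orderIso Dp rfl (fun j => (d j : ℤ))]
    rw [Finset.mul_sum]
    refine Finset.sum_congr rfl fun j _ => ?_
    rw [hda j]
    push_cast
    ring
  have hsuma : (∑ i ∈ Ap, (a i : ℤ)) = (p : ℤ) * ∑ i : Fin (n' + 1), (a' i : ℤ) := by
    rw [← sum_orderIso Ap hn' (fun i => (a i : ℤ))]
    rw [Finset.mul_sum]
    refine Finset.sum_congr rfl fun i _ => ?_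
    rw [haa i]
    push_cast
    ring
  have hdeltap : deltaOn Dp d Ap a = (p : ℤ) * deltaPair d' a' := by
    rw [deltaOn, deltaPair, deltaOn, hsumd, hsuma]
    ring
  -- gcd identities
  have hgA : (univ : Finset (Fin (n' + 1))).gcd a' = Ap.gcd (fun i => a i / p) := by
    have := gcd_orderIso Ap hn' (fun i => a i / p)
    simpa [ha'def, heA] using this
  have hgapm : Ap.gcd a = p * Ap.gcd (fun i => a i / p) := by
    rw [Finset.gcd_congr rfl (fun i hi => (Nat.mul_div_cancel' (hpa i hi)).symm :
      ∀ i ∈ Ap, a i = p * (a i / p))]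
    simpa using Finset.gcd_mul_left (s := Ap) (f := fun i => a i / p)
  -- gcd of Ap divides h
  have hgcdpos : 0 < Ap.gcd a := by
    rcases Nat.eq_zero_or_pos (Ap.gcd a) with h0 | h0
    · exfalso
      have h1 := Finset.gcd_eq_zero_iff.mp h0 i0 hi0
      have := ha i0
      omega
    · exact h0
  have hgph : Ap.gcd a ∣ h := by
    have hpgcd : p ∣ Ap.gcd a := Finset.dvd_gcd hpa
    rcases hreg Ap (subset_univ _) ⟨i0, hi0⟩
        (lt_of_lt_of_le (by omega : 1 < p) (Nat.le_of_dvd hgcdpos hpgcd)) with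
        ⟨P, _, hPc, hPd⟩ | hdvh
    · exfalso
      have hPD : P ⊆ Dp := fun j hj =>
        mem_filter.mpr ⟨mem_univ _, hpgcd.trans (hPd j hj)⟩
      have := Finset.card_le_card hPD
      omega
    · exact hdvh
  have hg1h' : (univ : Finset (Fin (n' + 1))).gcd a' ∣ h' := by
    have : p * (univ : Finset (Fin (n' + 1))).gcd a' ∣ p * h' := by
      rw [hgA, ← hgapm, ← hh']
      exact hgph
    exact (mul_dvd_mul_iff_left (by omega : p ≠ 0)).mp this
  -- the set defining frobNum h' a' is bounded above
  set S' : Set ℤ := {w : ℤ | ((Nat.lcm ((univ : Finset (Fin (n' + 1))).gcd a') h' : ℕ) : ℤ) ∣ w ∧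
    ¬ ∃ x : Fin (n' + 1) → ℕ, ((∑ i, x i * a' i : ℕ) : ℤ) = w} with hS'
  have hfrob' : frobNum h' a' = sSup S' := rfl
  obtain ⟨B, hB⟩ := repr_large (univ : Finset (Fin (n' + 1))) a' ⟨0, Nat.succ_pos n'⟩
    (mem_univ _) (ha' _)
  have hS'bdd : BddAbove S' := by
    refine ⟨B, fun w hw => ?_⟩
    by_contra hcon
    push_neg at hcon
    obtain ⟨hwdvd, hwrep⟩ := hw
    refine hwrep (hB w (le_of_lt hcon) ?_)
    exact dvd_trans (Int.natCast_dvd_natCast.mpr (Nat.dvd_lcm_left _ _)) hwdvd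
  -- frobNum h a ≤ p * frobNum h' a'
  have hkey : frobNum h a ≤ (p : ℤ) * frobNum h' a' := by
    rw [frobNum, frobOn]
    have hgne : (univ : Finset (Fin (n + 1))).gcd a ≠ 0 := by
      intro h0
      have h1 := Finset.gcd_eq_zero_iff.mp h0 i0 (mem_univ _)
      have := ha i0
      omega
    have hLpos : 0 < Nat.lcm ((univ : Finset (Fin (n + 1))).gcd a) h :=
      Nat.pos_of_ne_zero (Nat.lcm_ne_zero hgne (by omega))
    apply csSup_le
    · refine ⟨-(Nat.lcm ((univ : Finset (Fin (n + 1))).gcd a) h : ℤ), ⟨⟨-1, by ring⟩, ?_⟩⟩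
      rintro ⟨x, hx⟩
      have h1 : (0 : ℤ) ≤ ((∑ i, x i * a i : ℕ) : ℤ) := Int.natCast_nonneg _
      have h2 : (0 : ℤ) < (Nat.lcm ((univ : Finset (Fin (n + 1))).gcd a) h : ℤ) := by
        exact_mod_cast hLpos
      omega
    · rintro z ⟨hzdvd, hznrep⟩
      have hhz : (h : ℤ) ∣ z :=
        dvd_trans (Int.natCast_dvd_natCast.mpr (Nat.dvd_lcm_right _ _)) hzdvd
      have hpz : (p : ℤ) ∣ z := dvd_trans (Int.natCast_dvd_natCast.mpr ⟨h', hh'⟩) hhz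
      obtain ⟨w, hw⟩ := hpz
      have hh'w : (h' : ℤ) ∣ w := by
        obtain ⟨u, hu⟩ := hhz
        refine ⟨u, ?_⟩
        have hpne : (p : ℤ) ≠ 0 := by exact_mod_cast (by omega : p ≠ 0)
        apply mul_left_cancel₀ hpne
        rw [← hw]
        rw [hu, hh']
        push_cast
        ring
      have hwS' : w ∈ S' := by
        constructor
        · refine dvd_trans ?_ hh'w
          exact_mod_cast Int.natCast_dvd_natCast.mpr (Nat.lcm_dvd hg1h' dvd_rfl)
        · rintro ⟨x, hx⟩
          apply hznrep
          refine ⟨fun i => if hi : i ∈ Ap then x (eA.symm ⟨i, hi⟩) else 0, ?_⟩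
          have hsum : ∑ i : Fin (n + 1),
              (if hi : i ∈ Ap then x (eA.symm ⟨i, hi⟩) else 0) * a i
                = p * ∑ i : Fin (n' + 1), x i * a' i := by
            rw [← Finset.sum_subset (subset_univ Ap) (fun i _ hi => by rw [dif_neg hi, zero_mul])]
            rw [← sum_orderIso Ap hn'
              (fun i => (if hi : i ∈ Ap then x (eA.symm ⟨i, hi⟩) else 0) * a i)]
            rw [Finset.mul_sum]
            refine Finset.sum_congr rfl fun i _ => ?_
            rw [dif_pos (eA i).2]
            have heq : eA.symm ⟨(eA i : Fin (n + 1)), (eA i).2⟩ = i := by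
              have : (⟨(eA i : Fin (n + 1)), (eA i).2⟩ : {x // x ∈ Ap}) = eA i :=
                Subtype.ext rfl
              rw [this]
              exact eA.symm_apply_apply i
            rw [heq, haa i]
            ring
          rw [hsum, hw, Nat.cast_mul, hx]
      have hwle : w ≤ frobNum h' a' := by
        rw [hfrob']
        exact le_csSup hS'bdd hwS'
      rw [hw]
      have hppos : (0 : ℤ) < (p : ℤ) := by exact_mod_cast hp0
      exact mul_le_mul_of_nonneg_left hwle (le_of_lt hppos)
  -- conclude
  have hppos : (0 : ℤ) ≤ (p : ℤ) := Int.natCast_nonneg p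
  have hstep : (p : ℤ) * frobNum h' a' ≤ (p : ℤ) * deltaPair d' a' :=
    mul_le_mul_of_nonneg_left hIH hppos
  rw [← hdeltap] at hstep
  have := hdelta
  calc frobNum h a ≤ (p : ℤ) * frobNum h' a' := hkey
    _ ≤ deltaOn Dp d Ap a := hstep
    _ ≤ deltaPair d a := by linarith
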